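/- Let G ⊆ ℝⁿ be a nonempty compact set of positive Lebesgue measure. Then for every r > 0, |G_{2r}| − |G| ≤ 2ⁿ·(|G_r| − |G|), where G_r denotes the r-neighbourhood of G. -/

import Mathlib

open MeasureTheory Metric Filter Set Pointwise

section Aux

variable {E : Type*} [NormedAddCommGroup E] [InnerProductSpace ℝ E]

private lemma inner_aux' {u v s : E} (k1 : ‖u‖ ≤ ‖u + s‖) (k2 : ‖v‖ ≤ ‖v - s‖) :
    ‖u - v + s‖ ≤ ‖u - v + s + s‖ := by
  have e1 := norm_add_sq_real u s
  have e2 := norm_sub_sq_real v s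
  have e3 := norm_add_sq_real (u - v + s) s
  have e4 : inner ℝ (u - v + s) s = inner ℝ u s - inner ℝ v s + ‖s‖ ^ 2 := by
    simp [inner_sub_left, inner_add_left, real_inner_self_eq_norm_sq]
  nlinarith [norm_nonneg u, norm_nonneg (u + s), norm_nonneg v, norm_nonneg (v - s),
    norm_nonneg (u - v + s), norm_nonneg (u - v + s + s),
    sq_nonneg (‖u - v + s‖ + ‖u - v + s + s‖)]

private lemma midpoint_anti' {x y g₁ g₂ : E} (h₁ : dist x g₁ ≤ dist x g₂)
    (h₂ : dist y g₂ ≤ dist y g₁) :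
    dist x y ≤ 2 * dist (midpoint ℝ x g₁) (midpoint ℝ y g₂) := by
  have hm : midpoint ℝ x g₁ - midpoint ℝ y g₂ = (2:ℝ)⁻¹ • ((x - y) + (g₁ - g₂)) := by
    rw [midpoint_eq_smul_add, midpoint_eq_smul_add, ← smul_sub]
    congr 1
    abel
  have hd : dist (midpoint ℝ x g₁) (midpoint ℝ y g₂) = 2⁻¹ * ‖(x - y) + (g₁ - g₂)‖ := by
    rw [dist_eq_norm, hm, norm_smul]
    norm_num
  rw [hd, dist_eq_norm]
  have k1 : ‖x - g₁‖ ≤ ‖(x - g₁) + (g₁ - g₂)‖ := by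
    have h : (x - g₁) + (g₁ - g₂) = x - g₂ := by abel
    rw [h]; simpa [dist_eq_norm] using h₁
  have k2 : ‖y - g₂‖ ≤ ‖(y - g₂) - (g₁ - g₂)‖ := by
    have h : (y - g₂) - (g₁ - g₂) = y - g₁ := by abel
    rw [h]; simpa [dist_eq_norm] using h₂
  have key := inner_aux' k1 k2
  have h1 : (x - g₁) - (y - g₂) + (g₁ - g₂) = x - y := by abel
  rw [h1] at key
  linarith

end Aux

private lemma hausdorff_eq_smul_volume' (n : ℕ) :
    ∃ c : NNReal, c ≠ 0 ∧
      (μH[(n:ℝ)] : Measure (EuclideanSpace ℝ (Fin n))) = c • volume := by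
  set E := EuclideanSpace ℝ (Fin n)
  let e : E ≃L[ℝ] (Fin n → ℝ) := EuclideanSpace.equiv (Fin n) ℝ
  have hpi : (μH[(n:ℝ)] : Measure (Fin n → ℝ)) = volume := by
    simpa using hausdorffMeasure_pi_real (ι := Fin n)
  have hnn : (0:ℝ) ≤ (n:ℝ) := Nat.cast_nonneg n
  have hfin : IsFiniteMeasureOnCompacts (μH[(n:ℝ)] : Measure E) := by
    constructor
    intro K hK
    have h1 : K = e.symm.toContinuousLinearMap '' (e '' K) := by
      simp [Set.image_image]
    have h2 := (e.symm.toContinuousLinearMap.lipschitz).hausdorffMeasure_image_le hnn (e '' K)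
    rw [hpi] at h2
    have h3 : volume (e '' K) < ⊤ := (hK.image e.continuous).measure_lt_top
    calc μH[(n:ℝ)] K = μH[(n:ℝ)] (e.symm.toContinuousLinearMap '' (e '' K)) := by rw [← h1]
      _ ≤ (‖e.symm.toContinuousLinearMap‖₊ : ENNReal) ^ (n:ℝ) * volume (e '' K) := h2
      _ < ⊤ := ENNReal.mul_lt_top (by
            rw [ENNReal.rpow_natCast]
            exact ENNReal.pow_lt_top ENNReal.coe_lt_top) h3
  have hne0 : (μH[(n:ℝ)] : Measure E) ≠ 0 := by
    intro h0
    have h2 := (e.toContinuousLinearMap.lipschitz).hausdorffMeasure_image_le hnn (univ : Set E)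
    rw [hpi, h0] at h2
    have himg : (⇑e.toContinuousLinearMap '' (univ : Set E)) = univ :=
      Set.image_univ_of_surjective e.surjective
    rw [himg] at h2
    simp at h2
    have h4 := isOpen_univ.measure_ne_zero (μ := (volume : Measure (Fin n → ℝ))) univ_nonempty
    rw [h2] at h4
    simp at h4
  obtain ⟨c, hc⟩ : ∃ c : NNReal,
      (μH[(n:ℝ)] : Measure E) = c • volume :=
    ⟨_, Measure.isAddLeftInvariant_eq_smul (μH[(n:ℝ)]) volume⟩
  refine ⟨c, ?_, hc⟩
  intro h0
  rw [h0] at hc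
  simp at hc
  exact hne0 hc

/-- For a nonempty compact `G ⊆ ℝⁿ` of positive measure and every `r > 0`,
`|G_{2r}| - |G| ≤ 2ⁿ (|G_r| - |G|)`. -/
theorem volume_cthickening_two_mul_le {n : ℕ} (G : Set (EuclideanSpace ℝ (Fin n)))
    (hG : IsCompact G) (hne : G.Nonempty) (hpos : 0 < volume G) (r : ℝ) (hr : 0 < r) :
    (volume (cthickening (2 * r) G)).toReal - (volume G).toReal ≤
      2 ^ n * ((volume (cthickening r G)).toReal - (volume G).toReal) := by
  classical
  have hGclosed : IsClosed G := hG.isClosed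
  -- membership in cthickening via infDist
  have mem_cth : ∀ {δ : ℝ}, 0 ≤ δ → ∀ {x : EuclideanSpace ℝ (Fin n)}, (x ∈ cthickening δ G ↔ infDist x G ≤ δ) := by
    intro δ hδ x
    rw [mem_cthickening_iff, infDist]
    exact ENNReal.le_ofReal_iff_toReal_le (infEdist_ne_top hne) hδ
  -- nearest point projection
  have hproj : ∀ x : EuclideanSpace ℝ (Fin n), ∃ y ∈ G, infDist x G = dist x y := fun x =>
    hG.exists_infDist_eq_dist hne x
  set π : EuclideanSpace ℝ (Fin n) → EuclideanSpace ℝ (Fin n) := fun x => (hproj x).choose with hπ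
  have hπG : ∀ x, π x ∈ G := fun x => (hproj x).choose_spec.1
  have hπd : ∀ x, infDist x G = dist x (π x) := fun x => (hproj x).choose_spec.2
  set T : EuclideanSpace ℝ (Fin n) → EuclideanSpace ℝ (Fin n) := fun x => midpoint ℝ x (π x) with hT
  set A : Set (EuclideanSpace ℝ (Fin n)) := cthickening (2 * r) G \ G with hA
  set B : Set (EuclideanSpace ℝ (Fin n)) := cthickening r G \ G with hB
  -- T maps A into B
  have hTB : ∀ x ∈ A, T x ∈ B := by
    rintro x ⟨hx1, hx2⟩
    have hd2r : infDist x G ≤ 2 * r := (mem_cth (by linarith)).1 hx1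
    have hdpos : 0 < infDist x G := (hGclosed.notMem_iff_infDist_pos hne).1 hx2
    have hhalf : dist (T x) (π x) = infDist x G / 2 := by
      rw [hT]
      simp only
      rw [dist_midpoint_right, ← hπd x]
      norm_num
      ring
    have hxT : dist x (T x) = infDist x G / 2 := by
      rw [hT]
      simp only
      rw [dist_left_midpoint, ← hπd x]
      norm_num
      ring
    constructor
    · refine (mem_cth hr.le).2 ?_
      calc infDist (T x) G ≤ dist (T x) (π x) := infDist_le_dist_of_mem (hπG x)
        _ = infDist x G / 2 := hhalf
        _ ≤ r := by linarith
    · intro hTG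
      have h1 : infDist x G ≤ infDist (T x) G + dist x (T x) := infDist_le_infDist_add_dist
      have h2 : infDist (T x) G = 0 := infDist_zero_of_mem hTG
      rw [h2, hxT] at h1
      linarith
  -- T is antilipschitz on A
  have hTanti : ∀ x ∈ A, ∀ y ∈ A, dist x y ≤ 2 * dist (T x) (T y) := by
    intro x _ y _
    refine midpoint_anti' ?_ ?_
    · rw [← hπd x]; exact infDist_le_dist_of_mem (hπG y)
    · rw [← hπd y]; exact infDist_le_dist_of_mem (hπG x)
  -- inverse map
  set ψ : EuclideanSpace ℝ (Fin n) → EuclideanSpace ℝ (Fin n) := fun m => if h : ∃ x ∈ A, T x = m then h.choose else m with hψdef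
  have hψ : ∀ m ∈ T '' A, ψ m ∈ A ∧ T (ψ m) = m := by
    rintro m ⟨x, hx, rfl⟩
    have hex : ∃ y ∈ A, T y = T x := ⟨x, hx, rfl⟩
    simp only [hψdef, dif_pos hex]
    exact ⟨hex.choose_spec.1, hex.choose_spec.2⟩
  have hA_sub : A ⊆ ψ '' (T '' A) := by
    intro x hx
    refine ⟨T x, mem_image_of_mem _ hx, ?_⟩
    obtain ⟨hx', hTx'⟩ := hψ _ (mem_image_of_mem _ hx)
    have h := hTanti _ hx' _ hx
    rw [hTx'] at h
    simp only [dist_self, mul_zero] at h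
    exact dist_le_zero.1 h
  have hψlip : LipschitzOnWith 2 ψ (T '' A) := by
    refine LipschitzOnWith.of_dist_le_mul fun m₁ h₁ m₂ h₂ => ?_
    obtain ⟨hm₁, hm₁'⟩ := hψ _ h₁
    obtain ⟨hm₂, hm₂'⟩ := hψ _ h₂
    have h := hTanti _ hm₁ _ hm₂
    rw [hm₁', hm₂'] at h
    simpa using h
  -- Hausdorff measure estimate
  have hnn : (0:ℝ) ≤ (n:ℝ) := Nat.cast_nonneg n
  have hHaus : μH[(n:ℝ)] A ≤ 2 ^ n * μH[(n:ℝ)] B := by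
    calc μH[(n:ℝ)] A ≤ μH[(n:ℝ)] (ψ '' (T '' A)) := measure_mono hA_sub
      _ ≤ ((2 : NNReal) : ENNReal) ^ (n:ℝ) * μH[(n:ℝ)] (T '' A) :=
          hψlip.hausdorffMeasure_image_le hnn
      _ ≤ 2 ^ n * μH[(n:ℝ)] B := by
          rw [ENNReal.rpow_natCast]
          gcongr
          · simp
          exact image_subset_iff.2 fun x hx => hTB x hx
  obtain ⟨c, hc0, hc⟩ := hausdorff_eq_smul_volume' n
  have hvol : volume A ≤ 2 ^ n * volume B := by
    rw [hc] at hHaus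
    simp only [Measure.smul_apply, ENNReal.smul_def, smul_eq_mul] at hHaus
    rw [show (2:ENNReal) ^ n * ((c:ENNReal) * volume B)
        = (c:ENNReal) * ((2:ENNReal) ^ n * volume B) by ring] at hHaus
    exact (ENNReal.mul_le_mul_iff_right (by exact_mod_cast hc0) ENNReal.coe_ne_top).1 hHaus
  have hfin2 : volume (cthickening (2 * r) G) ≠ ⊤ := hG.cthickening.measure_lt_top.ne
  have hfin1 : volume (cthickening r G) ≠ ⊤ := hG.cthickening.measure_lt_top.ne
  have hsub2 : G ⊆ cthickening (2 * r) G := self_subset_cthickening G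
  have hsub1 : G ⊆ cthickening r G := self_subset_cthickening G
  have hGfin : volume G ≠ ⊤ := ne_top_of_le_ne_top hfin1 (measure_mono hsub1)
  have hdiff2 : volume A = volume (cthickening (2 * r) G) - volume G :=
    measure_diff hsub2 hGclosed.measurableSet.nullMeasurableSet hGfin
  have hdiff1 : volume B = volume (cthickening r G) - volume G :=
    measure_diff hsub1 hGclosed.measurableSet.nullMeasurableSet hGfin
  have e2 : (volume (cthickening (2 * r) G)).toReal - (volume G).toReal = (volume A).toReal := by
    rw [hdiff2, ENNReal.toReal_sub_of_le (measure_mono hsub2) hfin2]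
  have e1 : (volume (cthickening r G)).toReal - (volume G).toReal = (volume B).toReal := by
    rw [hdiff1, ENNReal.toReal_sub_of_le (measure_mono hsub1) hfin1]
  rw [e2, e1]
  have hBfin : (2:ENNReal) ^ n * volume B ≠ ⊤ :=
    ENNReal.mul_ne_top (ENNReal.pow_ne_top (by norm_num))
      (ne_top_of_le_ne_top hfin1 (measure_mono diff_subset))
  have hfinal := ENNReal.toReal_mono hBfin hvol
  rw [ENNReal.toReal_mul] at hfinal
  simpa using hfinal
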